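/- Let d ≥ 1 and let J(x) = ‖x‖⁻² • x be the unit-sphere inversion on EuclideanSpace ℝ (Fin d). Then for every x ≠ 0, J is differentiable at x and the absolute value of the determinant of its derivative satisfies |det(D_x J)| = ‖x‖^(−2d). -/

import Mathlib

/-- The unit-sphere inversion `J(x) = ‖x‖⁻² • x` on `d`-dimensional Euclidean space
(`d ≥ 1`) is differentiable at every `x ≠ 0`, and the absolute value of the determinant
of its derivative there equals `‖x‖^(−2d)`. -/
theorem inversion_jacobian_determinant
    (d : ℕ) (hd : 1 ≤ d)
    (J : EuclideanSpace ℝ (Fin d) → EuclideanSpace ℝ (Fin d))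
    (hJ : ∀ x, J x = (‖x‖ ^ 2)⁻¹ • x)
    (x : EuclideanSpace ℝ (Fin d)) (hx : x ≠ 0) :
    DifferentiableAt ℝ J x ∧
      |LinearMap.det (fderiv ℝ J x : EuclideanSpace ℝ (Fin d) →ₗ[ℝ] EuclideanSpace ℝ (Fin d))|
        = ‖x‖ ^ (-(2 * (d : ℝ))) := by
  have hJeq : J = EuclideanGeometry.inversion (0 : EuclideanSpace ℝ (Fin d)) 1 := by
    funext y
    rw [hJ y, EuclideanGeometry.inversion]
    simp [dist_eq_norm, div_pow]
  have hD := EuclideanGeometry.hasFDerivAt_inversion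
    (c := (0 : EuclideanSpace ℝ (Fin d))) (R := 1) (x := x) hx
  rw [← hJeq] at hD
  refine ⟨hD.differentiableAt, ?_⟩
  rw [hD.fderiv]
  have hxn : (0 : ℝ) < ‖x‖ := norm_pos_iff.2 hx
  have hcoe : (((1 / dist x 0) ^ 2 •
        (Submodule.reflection (ℝ ∙ (x - 0))ᗮ :
          EuclideanSpace ℝ (Fin d) →L[ℝ] EuclideanSpace ℝ (Fin d)) :
        EuclideanSpace ℝ (Fin d) →L[ℝ] EuclideanSpace ℝ (Fin d)) :
        EuclideanSpace ℝ (Fin d) →ₗ[ℝ] EuclideanSpace ℝ (Fin d))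
      = (1 / dist x 0) ^ 2 •
        ((Submodule.reflection (ℝ ∙ (x - 0))ᗮ).toLinearIsometry.toLinearMap) := by
    rfl
  rw [hcoe, LinearMap.det_smul]
  have hdetr : LinearMap.det
      ((Submodule.reflection (ℝ ∙ (x - 0))ᗮ).toLinearIsometry.toLinearMap)
      = (-1) ^ Module.finrank ℝ ((ℝ ∙ (x - 0))ᗮ)ᗮ := Submodule.det_reflection _
  rw [hdetr]
  have hdim : Module.finrank ℝ (EuclideanSpace ℝ (Fin d)) = d := by simp
  rw [abs_mul, hdim]
  have h2 : |(-1 : ℝ) ^ Module.finrank ℝ ((ℝ ∙ (x - 0))ᗮ)ᗮ| = 1 := by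
    simp [abs_pow]
  rw [h2, mul_one, dist_zero_right,
    abs_of_nonneg (by positivity : (0:ℝ) ≤ ((1 / ‖x‖) ^ 2) ^ d), one_div, inv_pow, ← inv_pow,
    ← pow_mul]
  have : ‖x‖ ^ (-(2 * (d : ℝ))) = (‖x‖ ^ (2 * d : ℕ))⁻¹ := by
    rw [Real.rpow_neg hxn.le, ← Real.rpow_natCast ‖x‖ (2 * d)]
    push_cast
    ring_nf
  rw [this, inv_pow]
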